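/- arXiv:0806.4802 — 6 statements merged into one kernel-verified Lean document; each statement's English description precedes it below -/
import Mathlib

section
/- There exists a positive constant C with C ≤ 2.32 such that the following holds. For every number of actions N ≥ 1, every discount factor α with 0 < α < 1/(800·ln(C·N)), every sequence of gains g_i^j ∈ [−1,1] chosen by Nature, and every round j ≥ 0, the average potential of the NormalHedge regrets satisfies (1/N)·Σ_{i=1}^N Φ(√α · R_i^j) < C. -/
open Finset
set_option maxHeartbeats 2000000

/-- The NormalHedge potential function: `Φ(x) = exp(x²/8)` for `x > 0`, `1` for `x ≤ 0`. -/
noncomputable def Phi (x : ℝ) : ℝ := if 0 < x then Real.exp (x ^ 2 / 8) else 1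

/-- NormalHedge weight for regret `R`:
`w = R·exp(α·R²/8)` if `R > 0`, and `0` if `R ≤ 0`. -/
noncomputable def nhWeight (α R : ℝ) : ℝ :=
  if 0 < R then R * Real.exp (α * R ^ 2 / 8) else 0

/-- NormalHedge probability on action `i` given current regrets `R`:
normalized weights if the weight sum is positive, uniform otherwise. -/
noncomputable def nhProb {N : ℕ} (α : ℝ) (R : Fin N → ℝ) (i : Fin N) : ℝ :=
  if 0 < ∑ k, nhWeight α (R k) then nhWeight α (R i) / ∑ k, nhWeight α (R k)
  else 1 / N

/-- NormalHedge regrets: `R_i^0 = 0`, `R_i^{j+1} = (1-α)·R_i^j + g_i^j - g_A^j` where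
`g_A^j = Σ_i p_i^j · g_i^j`. Here `g j i` is the gain of action `i` in round `j`. -/
noncomputable def nhRegret {N : ℕ} (α : ℝ) (g : ℕ → Fin N → ℝ) : ℕ → Fin N → ℝ
  | 0 => fun _ => 0
  | j + 1 => fun i =>
      (1 - α) * nhRegret α g j i + g j i -
        ∑ k, nhProb α (nhRegret α g j) k * g j k


lemma one_le_phi (x : ℝ) : 1 ≤ Phi x := by
  unfold Phi
  split_ifs
  · exact Real.one_le_exp (by positivity)
  · exact le_refl 1

lemma phi_sqrt {α : ℝ} (hα : 0 < α) (x : ℝ) :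
    Phi (Real.sqrt α * x) = if 0 < x then Real.exp (α * x ^ 2 / 8) else 1 := by
  have hs : 0 < Real.sqrt α := Real.sqrt_pos.2 hα
  have hsq : (Real.sqrt α * x) ^ 2 = α * x ^ 2 := by
    rw [mul_pow, Real.sq_sqrt hα.le]
  unfold Phi
  by_cases hx : 0 < x
  · rw [if_pos hx, if_pos (mul_pos hs hx), hsq]
  · push_neg at hx
    rw [if_neg (by push_neg; exact mul_nonpos_of_nonneg_of_nonpos hs.le hx),
      if_neg (not_lt.2 hx)]

lemma nhWeight_nonneg (α R : ℝ) : 0 ≤ nhWeight α R := by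
  unfold nhWeight
  split_ifs with h
  · positivity
  · exact le_refl 0

lemma sum_weight_G {N : ℕ} (α : ℝ) (R g' : Fin N → ℝ) :
    ∑ k, nhWeight α (R k) * (g' k - ∑ m, nhProb α R m * g' m) = 0 := by
  set w : Fin N → ℝ := fun k => nhWeight α (R k) with hw
  by_cases hW : 0 < ∑ k, w k
  · have hT : ∑ m, nhProb α R m * g' m = (∑ m, w m * g' m) / (∑ k, w k) := by
      unfold nhProb
      simp only [if_pos (show 0 < ∑ k, nhWeight α (R k) from hW), div_mul_eq_mul_div, ← Finset.sum_div, hw]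
    rw [hT]
    have hWne : (∑ k, w k) ≠ 0 := ne_of_gt hW
    rw [Finset.sum_congr rfl (fun k _ => mul_sub (w k) (g' k) _), Finset.sum_sub_distrib,
      ← Finset.sum_mul]
    field_simp
    ring
  · have h0 : ∀ k ∈ Finset.univ, w k = 0 := by
      rw [← Finset.sum_eq_zero_iff_of_nonneg (fun k _ => nhWeight_nonneg α (R k))]
      have : 0 ≤ ∑ k, w k := Finset.sum_nonneg (fun k _ => nhWeight_nonneg α (R k))
      linarith [not_lt.1 hW]
    exact Finset.sum_eq_zero (fun k hk => by rw [show nhWeight α (R k) = w k from rfl, h0 k hk, zero_mul])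

lemma nhProb_nonneg {N : ℕ} (α : ℝ) (R : Fin N → ℝ) (i : Fin N) : 0 ≤ nhProb α R i := by
  unfold nhProb; split_ifs with h
  · exact div_nonneg (nhWeight_nonneg _ _) h.le
  · positivity

lemma sum_nhProb {N : ℕ} (hN : 1 ≤ N) (α : ℝ) (R : Fin N → ℝ) :
    ∑ i, nhProb α R i = 1 := by
  unfold nhProb
  split_ifs with h
  · rw [← Finset.sum_div]
    exact div_self (ne_of_gt h)
  · rw [Finset.sum_const, Finset.card_univ, Fintype.card_fin, nsmul_eq_mul]
    have hN0 : (N : ℝ) ≠ 0 := by positivity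
    field_simp

lemma gA_abs {N : ℕ} (hN : 1 ≤ N) (α : ℝ) (R g' : Fin N → ℝ) (hg : ∀ i, |g' i| ≤ 1) :
    |∑ m, nhProb α R m * g' m| ≤ 1 := by
  calc |∑ m, nhProb α R m * g' m| ≤ ∑ m, |nhProb α R m * g' m| :=
        Finset.abs_sum_le_sum_abs _ _
    _ ≤ ∑ m, nhProb α R m := by
        apply Finset.sum_le_sum
        intro m _
        rw [abs_mul, abs_of_nonneg (nhProb_nonneg α R m)]
        calc nhProb α R m * |g' m| ≤ nhProb α R m * 1 :=
              mul_le_mul_of_nonneg_left (hg m) (nhProb_nonneg α R m)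
          _ = nhProb α R m := mul_one _
    _ = 1 := sum_nhProb hN α R

lemma exp_quad {t : ℝ} (ht : |t| ≤ 1/18) :
    Real.exp t ≤ 1 + t + (513/1000) * t ^ 2 := by
  have h1 : |t| ≤ 1 := le_trans ht (by norm_num)
  have h := Real.exp_bound h1 (n := 3) (by norm_num)
  have hsum : ∑ m ∈ Finset.range 3, t ^ m / m.factorial = 1 + t + t ^ 2 / 2 := by
    rw [Finset.sum_range_succ, Finset.sum_range_succ, Finset.sum_range_one]
    norm_num [Nat.factorial]
  rw [hsum] at h
  have h2 := (abs_sub_le_iff.1 h).1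
  norm_num [Nat.factorial] at h2
  have habs3 : |t| ^ 3 ≤ (1/18) * t ^ 2 := by
    have : |t| ^ 3 = |t| * t ^ 2 := by
      rw [← sq_abs]; ring
    rw [this]
    nlinarith [sq_nonneg t, abs_nonneg t]
  nlinarith [sq_nonneg t, abs_nonneg t, pow_nonneg (abs_nonneg t) 3]

lemma pot_bound (u : ℝ) : Real.exp u * (28 - 17 * u) ≤ 34 := by
  rcases le_or_gt (28 - 17 * u) 0 with h | h
  · have := Real.exp_pos u
    nlinarith
  · set v : ℝ := 28/17 - u with hv
    have hv0 : 0 < v := by simp only [hv]; linarith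
    have h1 : v ≤ Real.exp (v - 1) := by
      have := Real.add_one_le_exp (v - 1)
      linarith
    have h2 : Real.exp u * (28 - 17 * u) = 17 * (v * Real.exp u) := by
      simp only [hv]; ring
    rw [h2]
    have h3 : v * Real.exp u ≤ Real.exp (v - 1) * Real.exp u :=
      mul_le_mul_of_nonneg_right h1 (Real.exp_pos u).le
    rw [← Real.exp_add] at h3
    have h4 : v - 1 + u = 11/17 := by simp only [hv]; ring
    rw [h4] at h3
    have h5 : Real.exp (11/17 : ℝ) ≤ 2 := by
      have hlog := Real.log_two_gt_d9
      have : (11/17 : ℝ) < Real.log 2 := by linarith [hlog]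
      have := Real.exp_lt_exp.2 this
      rw [Real.exp_log (by norm_num : (0:ℝ) < 2)] at this
      linarith
    nlinarith [Real.exp_pos u]

lemma core_bound {α u a b c : ℝ} (hα : 0 < α) (hα5 : α ≤ 1/500)
    (hu0 : 0 ≤ u) (hau : α * u < 1/800)
    (hbl : -(1/20) ≤ b) (hbr : b ≤ 1/20) (hb2 : b ^ 2 ≤ 2 * (α * u))
    (haG : (999/500) * (α * u) ≤ a) (haU : a ≤ 2 * (α * u))
    (hc0 : 0 ≤ c) (hcU : c ≤ α/2) :
    Real.exp (u + (-a + b + c)) ≤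
      Real.exp u * (1 + b) + (17/20) * α * (2 - Real.exp u) := by
  have hau0 : 0 ≤ α * u := by positivity
  have ha0 : 0 ≤ a := le_trans (by nlinarith) haG
  have haU' : a ≤ 1/400 := by linarith
  have hcU' : c ≤ 1/1000 := by linarith
  have ht18 : |(-a + b + c)| ≤ 1/18 := by
    rw [abs_le]; constructor <;> linarith
  have hexp := exp_quad ht18
  have h2b : 2 * b * (c - a) ≤ (a + c) / 10 := by
    nlinarith [mul_nonneg (by linarith : (0:ℝ) ≤ 1/20 - b) hc0,
      mul_nonneg (by linarith : (0:ℝ) ≤ 1/20 + b) ha0,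
      mul_nonneg (by linarith : (0:ℝ) ≤ 1/20 + b) hc0,
      mul_nonneg (by linarith : (0:ℝ) ≤ 1/20 - b) ha0]
  have hca : (c - a) ^ 2 ≤ (a + c) * (7/2000) := by
    nlinarith [mul_nonneg ha0 hc0]
  have ht2 : (-a + b + c) ^ 2 ≤ 2 * (α * u) + (a + c) * (1/10 + 7/2000) := by
    have hsq : (-a + b + c) ^ 2 = b ^ 2 + (2 * b * (c - a) + (c - a) ^ 2) := by ring
    rw [hsq]; linarith
  have key : (-a + b + c) + (513/1000) * (-a + b + c) ^ 2 ≤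
      b + (11/20) * α - (17/20) * (α * u) := by nlinarith [ht2]
  have hEpos := Real.exp_pos u
  have step2 : Real.exp (u + (-a + b + c)) ≤
      Real.exp u * (1 + (-a + b + c) + (513/1000) * (-a + b + c) ^ 2) := by
    rw [Real.exp_add]
    exact mul_le_mul_of_nonneg_left (by linarith [hexp]) hEpos.le
  have step3 : Real.exp u * (1 + (-a + b + c) + (513/1000) * (-a + b + c) ^ 2) ≤
      Real.exp u * (1 + b + (11/20) * α - (17/20) * (α * u)) :=
    mul_le_mul_of_nonneg_left (by linarith) hEpos.le
  have step5 : Real.exp u * (28 - 17 * u) / 20 - (17/20) * Real.exp u ≤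
      (17/20) * (2 - Real.exp u) := by
    have := pot_bound u
    nlinarith
  have step6 : α * (Real.exp u * (28 - 17 * u) / 20 - (17/20) * Real.exp u) ≤
      α * ((17/20) * (2 - Real.exp u)) := mul_le_mul_of_nonneg_left step5 hα.le
  have step4 : Real.exp u * (1 + b + (11/20) * α - (17/20) * (α * u)) =
      Real.exp u * (1 + b) +
        α * (Real.exp u * (28 - 17 * u) / 20 - (17/20) * Real.exp u) := by ring
  calc Real.exp (u + (-a + b + c)) ≤
        Real.exp u * (1 + (-a + b + c) + (513/1000) * (-a + b + c) ^ 2) := step2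
    _ ≤ Real.exp u * (1 + b + (11/20) * α - (17/20) * (α * u)) := step3
    _ = Real.exp u * (1 + b) +
        α * (Real.exp u * (28 - 17 * u) / 20 - (17/20) * Real.exp u) := step4
    _ ≤ Real.exp u * (1 + b) + α * ((17/20) * (2 - Real.exp u)) := by linarith [step6]
    _ = Real.exp u * (1 + b) + (17/20) * α * (2 - Real.exp u) := by ring

lemma active_bound {α R G L : ℝ} (hα : 0 < α) (hα5 : α ≤ 1/500)
    (hG : |G| ≤ 2) (hL : α * L < 1/800) (hu : α * R ^ 2 / 8 < L) (hR : 0 < R) :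
    Real.exp (α * ((1 - α) * R + G) ^ 2 / 8) ≤
      Real.exp (α * R ^ 2 / 8) * (1 + (1 - α) * α * R * G / 4)
        + (17/20) * α * (2 - Real.exp (α * R ^ 2 / 8)) := by
  obtain ⟨hGl, hGr⟩ := abs_le.1 hG
  have hau : α * (α * R ^ 2 / 8) < 1/800 := by nlinarith
  have hau0 : 0 ≤ α * (α * R ^ 2 / 8) := by positivity
  have hP0 : 0 < α * R := mul_pos hα hR
  have hP2 : (α * R) ^ 2 = 8 * (α * (α * R ^ 2 / 8)) := by ring
  have hP1 : α * R < 1/10 := by nlinarith [sq_nonneg (α * R - 1/10)]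
  have hbr : (1 - α) * α * R * G / 4 ≤ 1/20 := by
    nlinarith [mul_nonneg (mul_nonneg (by linarith : (0:ℝ) ≤ 1 - α) hP0.le)
        (by linarith : (0:ℝ) ≤ 2 - G),
      mul_nonneg hα.le hP0.le]
  have hbl : -(1/20) ≤ (1 - α) * α * R * G / 4 := by
    nlinarith [mul_nonneg (mul_nonneg (by linarith : (0:ℝ) ≤ 1 - α) hP0.le)
        (by linarith : (0:ℝ) ≤ 2 + G),
      mul_nonneg hα.le hP0.le]
  have h4G : 0 ≤ 4 - ((1 - α) * G) ^ 2 := by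
    nlinarith [mul_nonneg (mul_nonneg hα.le (by linarith : (0:ℝ) ≤ 2 - α)) (sq_nonneg G)]
  have hb2 : ((1 - α) * α * R * G / 4) ^ 2 ≤ 2 * (α * (α * R ^ 2 / 8)) := by
    nlinarith [mul_nonneg (sq_nonneg (α * R)) h4G]
  have haG : (999/500) * (α * (α * R ^ 2 / 8)) ≤ (2 - α) * α * (α * R ^ 2 / 8) := by
    nlinarith [mul_nonneg (by linarith : (0:ℝ) ≤ 1/500 - α + (1 - 999/1000)) hau0]
  have haU : (2 - α) * α * (α * R ^ 2 / 8) ≤ 2 * (α * (α * R ^ 2 / 8)) := by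
    nlinarith [mul_nonneg hα.le hau0]
  have hc0 : 0 ≤ α * G ^ 2 / 8 := by positivity
  have hcU : α * G ^ 2 / 8 ≤ α / 2 := by
    nlinarith [mul_nonneg hα.le (by nlinarith : (0:ℝ) ≤ 4 - G ^ 2)]
  have hkey := core_bound hα hα5 (by positivity : (0:ℝ) ≤ α * R ^ 2 / 8) hau
    hbl hbr hb2 haG haU hc0 hcU
  have harg : α * ((1 - α) * R + G) ^ 2 / 8 =
      α * R ^ 2 / 8 + (-( (2 - α) * α * (α * R ^ 2 / 8)) + (1 - α) * α * R * G / 4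
        + α * G ^ 2 / 8) := by ring
  rw [harg]
  exact hkey

lemma inactive_bound {α R G : ℝ} (hα : 0 < α) (hα5 : α ≤ 1/500)
    (hG : |G| ≤ 2) (hR : ¬ 0 < R) :
    Phi (Real.sqrt α * ((1 - α) * R + G)) ≤ 1 + (17/20) * α := by
  push_neg at hR
  obtain ⟨hGl, hGr⟩ := abs_le.1 hG
  rw [phi_sqrt hα]
  split_ifs with h
  · have h1a : (1 - α) * R ≤ 0 :=
      mul_nonpos_of_nonneg_of_nonpos (by linarith) hR
    have hle2 : (1 - α) * R + G ≤ 2 := by linarith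
    have harg : α * ((1 - α) * R + G) ^ 2 / 8 ≤ α / 2 := by
      nlinarith [mul_nonneg hα.le
        (by nlinarith : (0:ℝ) ≤ 4 - ((1 - α) * R + G) ^ 2)]
    have h2 : Real.exp (α * ((1 - α) * R + G) ^ 2 / 8) ≤ Real.exp (α/2) :=
      Real.exp_le_exp.2 harg
    have h4 : Real.exp (α/2) ≤ 1 / (1 - α/2) :=
      Real.exp_bound_div_one_sub_of_interval (by linarith) (by linarith)
    have hpos : (0:ℝ) < 1 - α/2 := by linarith
    have h5 : 1 / (1 - α/2) ≤ 1 + (17/20) * α := by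
      rw [div_le_iff₀ hpos]; nlinarith
    linarith
  · linarith

lemma step_i {α R G L : ℝ} (hα : 0 < α) (hα5 : α ≤ 1/500)
    (hG : |G| ≤ 2) (hL : α * L < 1/800) (hu : 0 < R → α * R ^ 2 / 8 < L) :
    Phi (Real.sqrt α * ((1 - α) * R + G)) ≤ Phi (Real.sqrt α * R)
      + (1 - α) * α / 4 * (nhWeight α R * G)
      + (17/20) * α * (2 - Phi (Real.sqrt α * R)) := by
  by_cases hR : 0 < R
  · have hPhiR : Phi (Real.sqrt α * R) = Real.exp (α * R ^ 2 / 8) := by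
      rw [phi_sqrt hα, if_pos hR]
    have hw : nhWeight α R = R * Real.exp (α * R ^ 2 / 8) := by
      unfold nhWeight; rw [if_pos hR]
    have h1 : Phi (Real.sqrt α * ((1 - α) * R + G)) ≤
        Real.exp (α * ((1 - α) * R + G) ^ 2 / 8) := by
      rw [phi_sqrt hα]
      split_ifs
      · exact le_refl _
      · exact Real.one_le_exp (by positivity)
    have h2 := active_bound hα hα5 hG hL (hu hR) hR
    rw [hPhiR, hw]
    have h3 : Real.exp (α * R ^ 2 / 8) * (1 + (1 - α) * α * R * G / 4) =
        Real.exp (α * R ^ 2 / 8)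
          + (1 - α) * α / 4 * (R * Real.exp (α * R ^ 2 / 8) * G) := by ring
    linarith [h1, h2, h3.le, h3.ge]
  · have hPhiR : Phi (Real.sqrt α * R) = 1 := by
      rw [phi_sqrt hα, if_neg hR]
    have hw : nhWeight α R = 0 := by unfold nhWeight; rw [if_neg hR]
    rw [hPhiR, hw]
    have := inactive_bound hα hα5 hG hR
    calc Phi (Real.sqrt α * ((1 - α) * R + G)) ≤ 1 + (17/20) * α := this
      _ = 1 + (1 - α) * α / 4 * (0 * G) + (17/20) * α * (2 - 1) := by ring

/-- there is a positive constant `C ≤ 2.32` such that for all `N ≥ 1`,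
all `0 < α < 1/(800 ln(CN))`, all gain sequences in `[-1,1]`, and all rounds `j`,
the average potential `(1/N)·Σ_i Φ(√α · R_i^j)` is below `C`. -/
theorem normalHedge_average_potential_bound :
    ∃ C : ℝ, 0 < C ∧ C ≤ 2.32 ∧
      ∀ (N : ℕ), 1 ≤ N →
      ∀ α : ℝ, 0 < α → α < 1 / (800 * Real.log (C * N)) →
      ∀ g : ℕ → Fin N → ℝ, (∀ j i, g j i ∈ Set.Icc (-1 : ℝ) 1) →
      ∀ j : ℕ,
        (1 / (N : ℝ)) * ∑ i, Phi (Real.sqrt α * nhRegret α g j i) < C := by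
  refine ⟨2, by norm_num, by norm_num, ?_⟩
  intro N hN α hα0 hαlt g hg j
  have hN0 : (0:ℝ) < N := by exact_mod_cast Nat.pos_of_ne_zero (by omega)
  have hN1 : (1:ℝ) ≤ N := by exact_mod_cast hN
  set L : ℝ := Real.log (2 * N) with hLdef
  have hL2 : Real.log 2 ≤ L := by
    apply Real.log_le_log (by norm_num)
    linarith
  have hlog2 := Real.log_two_gt_d9
  have hLpos : 0 < L := by linarith
  have h800 : (0:ℝ) < 800 * L := by positivity
  have hαL : α * L < 1/800 := by
    have h1 := (lt_div_iff₀ h800).1 hαlt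
    nlinarith
  have hα5 : α ≤ 1/500 := by
    nlinarith [mul_nonneg hα0.le (by linarith : (0:ℝ) ≤ L - 0.6931471803)]
  have main : ∀ j : ℕ, ∑ i, Phi (Real.sqrt α * nhRegret α g j i) < 2 * N := by
    intro j
    induction j with
    | zero =>
        have h0 : ∀ i : Fin N, Phi (Real.sqrt α * nhRegret α g 0 i) = 1 := by
          intro i
          show Phi (Real.sqrt α * 0) = 1
          rw [mul_zero]
          unfold Phi
          rw [if_neg (lt_irrefl 0)]
        rw [Finset.sum_congr rfl (fun i _ => h0 i), Finset.sum_const, Finset.card_univ,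
          Fintype.card_fin, nsmul_eq_mul, mul_one]
        linarith
    | succ j ih =>
        set R : Fin N → ℝ := nhRegret α g j with hRdef
        set gA : ℝ := ∑ k, nhProb α R k * g j k with hgAdef
        have hgA : |gA| ≤ 1 :=
          gA_abs hN α R (g j) (fun i => abs_le.2 ⟨(hg j i).1, (hg j i).2⟩)
        obtain ⟨hgAl, hgAr⟩ := abs_le.1 hgA
        have hstep : ∀ i : Fin N, Phi (Real.sqrt α * nhRegret α g (j+1) i) ≤
            Phi (Real.sqrt α * R i)
              + (1 - α) * α / 4 * (nhWeight α (R i) * (g j i - gA))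
              + (17/20) * α * (2 - Phi (Real.sqrt α * R i)) := by
          intro i
          have hGi : |g j i - gA| ≤ 2 :=
            abs_le.2 ⟨by linarith [(hg j i).1], by linarith [(hg j i).2]⟩
          have hreg : nhRegret α g (j+1) i = (1 - α) * R i + (g j i - gA) := by
            show (1 - α) * nhRegret α g j i + g j i -
              ∑ k, nhProb α (nhRegret α g j) k * g j k = _
            rw [← hRdef, ← hgAdef]
            ring
          rw [hreg]
          apply step_i hα0 hα5 hGi hαL
          intro hRi
          have h1 : Phi (Real.sqrt α * R i) ≤ ∑ k, Phi (Real.sqrt α * R k) :=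
            Finset.single_le_sum (f := fun k => Phi (Real.sqrt α * R k))
              (fun k _ => le_trans zero_le_one (one_le_phi _)) (Finset.mem_univ i)
          have h2 : Phi (Real.sqrt α * R i) = Real.exp (α * R i ^ 2 / 8) := by
            rw [phi_sqrt hα0, if_pos hRi]
          have h3 : Real.exp (α * R i ^ 2 / 8) < 2 * N := by
            rw [← h2]; exact lt_of_le_of_lt h1 ih
          exact (Real.lt_log_iff_exp_lt (by positivity)).2 h3
        have hsum := Finset.sum_le_sum (s := Finset.univ) (fun i (_ : i ∈ Finset.univ) => hstep i)
        set S : ℝ := ∑ i, Phi (Real.sqrt α * R i) with hSdef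
        have hsplit : ∑ i, (Phi (Real.sqrt α * R i)
              + (1 - α) * α / 4 * (nhWeight α (R i) * (g j i - gA))
              + (17/20) * α * (2 - Phi (Real.sqrt α * R i)))
            = S + (1 - α) * α / 4 *
                (∑ i, nhWeight α (R i) * (g j i - gA))
              + (17/20) * α * (2 * N - S) := by
          rw [Finset.sum_add_distrib, Finset.sum_add_distrib, ← Finset.mul_sum,
            ← Finset.mul_sum]
          congr 1
          rw [Finset.sum_sub_distrib, Finset.sum_const, Finset.card_univ,
            Fintype.card_fin, nsmul_eq_mul, mul_comm ((N:ℝ)) 2]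
        have hzero : ∑ i, nhWeight α (R i) * (g j i - gA) = 0 := sum_weight_G α R (g j)
        rw [hsplit, hzero, mul_zero, add_zero] at hsum
        have hq : (17/20) * α < 1 := by nlinarith
        have hq0 : 0 < (17/20) * α := by positivity
        calc ∑ i, Phi (Real.sqrt α * nhRegret α g (j+1) i) ≤
              S + (17/20) * α * (2 * N - S) := hsum
          _ < 2 * N := by nlinarith [ih]
  have hj := main j
  have hfin : (1 / (N : ℝ)) * ∑ i, Phi (Real.sqrt α * nhRegret α g j i) <
      (1 / (N : ℝ)) * (2 * N) := by
    apply mul_lt_mul_of_pos_left hj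
    positivity
  have : (1 / (N : ℝ)) * (2 * N) = 2 := by field_simp
  linarith
end

section
/- Let α ∈ (0, 1/800), let x ≤ 0, and let r ∈ [−2, 2]. Then Φ(x) = 1 and Φ((1−α)·x + √α·r) ≤ Φ(2√α) = exp(α/2) < 1 + (3/5)·α. In particular, for an action whose current scaled regret is nonpositive, the potential after one NormalHedge update is less than 1 + (3/5)·α. -/
lemma Phi_mono {a b : ℝ} (h : a ≤ b) : Phi a ≤ Phi b := by
  unfold Phi
  by_cases ha : 0 < a
  · rw [if_pos ha, if_pos (lt_of_lt_of_le ha h)]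
    exact Real.exp_le_exp.2 (by nlinarith)
  · rw [if_neg ha]
    by_cases hb : 0 < b
    · rw [if_pos hb]
      exact Real.one_le_exp (by positivity)
    · rw [if_neg hb]

/-- for `α ∈ (0, 1/800)`, `x ≤ 0`, `r ∈ [-2,2]`: `Φ(x) = 1`,
`Φ((1-α)x + √α·r) ≤ Φ(2√α) = exp(α/2) < 1 + (3/5)α`. -/
theorem normalHedge_nonpositive_regret_potential_step
    (α : ℝ) (hα0 : 0 < α) (hα1 : α < 1 / 800)
    (x : ℝ) (hx : x ≤ 0)
    (r : ℝ) (hr : r ∈ Set.Icc (-2 : ℝ) 2) :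
    Phi x = 1 ∧
    Phi ((1 - α) * x + Real.sqrt α * r) ≤ Phi (2 * Real.sqrt α) ∧
    Phi (2 * Real.sqrt α) = Real.exp (α / 2) ∧
    Real.exp (α / 2) < 1 + (3 / 5) * α := by
  have hs : 0 < Real.sqrt α := Real.sqrt_pos.2 hα0
  have hsq : Real.sqrt α ^ 2 = α := Real.sq_sqrt hα0.le
  refine ⟨if_neg (by linarith), ?_, ?_, ?_⟩
  · apply Phi_mono
    have h1 : (1 - α) * x ≤ 0 := mul_nonpos_of_nonneg_of_nonpos (by linarith) hx
    have h2 : Real.sqrt α * r ≤ Real.sqrt α * 2 := by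
      exact mul_le_mul_of_nonneg_left hr.2 hs.le
    linarith [h2]
  · rw [Phi, if_pos (by positivity)]
    congr 1
    rw [mul_pow, hsq]; ring
  · have h := Real.add_one_le_exp (-(α / 2))
    have hlt : 1 - α / 2 ≤ Real.exp (-(α / 2)) := by linarith
    have hpos : 0 < Real.exp (-(α / 2)) := Real.exp_pos _
    have : Real.exp (α / 2) = (Real.exp (-(α / 2)))⁻¹ := by
      rw [← Real.exp_neg, neg_neg]
    rw [this]
    rw [inv_lt_iff_one_lt_mul₀ hpos]
    nlinarith [hpos, hlt]
end

section
/- Let α ∈ (0, 1/800], let R > 0 satisfy √α·R ≤ 1/10, let r ∈ [−2, 2], and set R' = (1−α)·R + √α·r. Then Φ(R') − Φ(R) ≤ √α·r·Φ'(R) + α·(2/3 − R²/10)·exp(R²/8), where Φ'(R) = (R/4)·exp(R²/8). -/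
set_option maxHeartbeats 1600000

private lemma nh_key_poly (s R r : ℝ) (hs : 0 < s) (hs2 : s^2 ≤ 1/800) (hR : 0 < R)
    (hu : s*R ≤ 1/10) (hr1 : -2 ≤ r) (hr2 : r ≤ 2) :
    (r^2/8 - R^2/4 - s*r*R/4 + s^2*R^2/8)
      + (47/90)*(r^2*R^2/16)
      + (47/90)*(s*(r*R/2))*(r^2/8 - R^2/4 - s*r*R/4 + s^2*R^2/8)
      + (47/90)*s^2*(r^2/8 - R^2/4 - s*r*R/4 + s^2*R^2/8)^2
      ≤ 2/3 - R^2/10 := by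
  set W : ℝ := r^2/8 - R^2/4 - s*r*R/4 + s^2*R^2/8 with hWdef
  have hsR : 0 < s*R := mul_pos hs hR
  have hr4 : r^2 ≤ 4 := by nlinarith
  have hX : |s*r*R| ≤ 1/5 := by
    rw [abs_le]; constructor <;> nlinarith [mul_pos hs hR]
  have hWub : W ≤ r^2/8 - R^2/4 + 1/20 + 1/800 := by
    rw [hWdef]; nlinarith [sq_nonneg (s*R)]
  have hWabs : |W| ≤ R^2/4 + 443/800 := by
    rw [abs_le]; constructor <;> nlinarith [sq_nonneg (s*R), sq_nonneg r]
  have h2 : (s*r*R)*W ≤ (1/5)*(R^2/4 + 443/800) := by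
    calc (s*r*R)*W ≤ |s*r*R| * |W| := le_trans (le_abs_self _) (abs_mul _ _).le
    _ ≤ (1/5)*(R^2/4 + 443/800) := by
        apply mul_le_mul hX hWabs (abs_nonneg _) (by norm_num)
  have h3 : s^2*W^2 ≤ R^2/1600 + 443/160000 + (443/800)^2*(1/800) := by
    have : W^2 ≤ (R^2/4 + 443/800)^2 := by
      rw [← sq_abs]; exact pow_le_pow_left₀ (abs_nonneg _) hWabs 2
    have h4 : s^2*W^2 ≤ s^2*(R^2/4 + 443/800)^2 :=
      mul_le_mul_of_nonneg_left this (sq_nonneg s)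
    nlinarith [sq_nonneg (s*R), sq_nonneg s, sq_nonneg R,
      mul_le_mul hu hu (le_of_lt hsR) (by norm_num : (0:ℝ) ≤ 1/10),
      mul_le_mul_of_nonneg_right hs2 (sq_nonneg R)]
  nlinarith [mul_nonneg (sub_nonneg.2 hr4) (sq_nonneg R)]



/-- for `α ∈ (0,1/800]`, `R > 0` with `√α·R ≤ 1/10`, `r ∈ [-2,2]`, and
`R' = (1-α)R + √α·r`, one has
`Φ(R') - Φ(R) ≤ √α·r·Φ'(R) + α·(2/3 - R²/10)·exp(R²/8)` with `Φ'(R) = (R/4)·exp(R²/8)`. -/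
theorem normalHedge_positive_regret_potential_step
    (α : ℝ) (hα0 : 0 < α) (hα1 : α ≤ 1 / 800)
    (R : ℝ) (hR : 0 < R) (hRα : Real.sqrt α * R ≤ 1 / 10)
    (r : ℝ) (hr : r ∈ Set.Icc (-2 : ℝ) 2)
    (R' : ℝ) (hR' : R' = (1 - α) * R + Real.sqrt α * r) :
    Phi R' - Phi R ≤
      Real.sqrt α * r * ((R / 4) * Real.exp (R ^ 2 / 8)) +
        α * (2 / 3 - R ^ 2 / 10) * Real.exp (R ^ 2 / 8) := by
  obtain ⟨hr1, hr2⟩ := hr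
  set s := Real.sqrt α with hsdef
  have hs0 : 0 < s := Real.sqrt_pos.2 hα0
  have hα : α = s^2 := (Real.sq_sqrt hα0.le).symm
  rw [hα] at hR' hα1 ⊢
  have hs2 : s^2 ≤ 1/800 := hα1
  have hu : s*R ≤ 1/10 := hRα
  -- the increment D
  set D : ℝ := R'^2/8 - R^2/8 with hDdef
  have hDval : D = s*(r*R/4) + s^2*((r^2/8 - R^2/4 - s*r*R/4 + s^2*R^2/8)) := by
    rw [hDdef, hR']; ring
  have hX : |s*r*R| ≤ 1/5 := by
    rw [abs_le]; constructor <;> nlinarith [mul_pos hs0 hR]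
  have hX1 : -(1/5) ≤ s*r*R := (abs_le.1 hX).1
  have hX2 : s*r*R ≤ 1/5 := (abs_le.1 hX).2
  have hDabs : |D| ≤ 1/10 := by
    rw [abs_le, hDval]
    constructor <;>
      nlinarith [sq_nonneg (s*R), sq_nonneg s, sq_nonneg (s*r), sq_nonneg r,
        mul_le_mul_of_nonneg_left hX2 (sq_nonneg s),
        mul_le_mul_of_nonneg_left hX1 (sq_nonneg s),
        mul_le_mul hu hu (le_of_lt (mul_pos hs0 hR)) (by norm_num : (0:ℝ) ≤ 1/10),
        mul_le_mul_of_nonneg_right hs2 (sq_nonneg r),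
        mul_le_mul_of_nonneg_right hs2 (sq_nonneg R),
        mul_le_mul (mul_le_mul hu hu (le_of_lt (mul_pos hs0 hR)) (by norm_num : (0:ℝ) ≤ 1/10)) hs2 (sq_nonneg s) (by norm_num : (0:ℝ) ≤ 1/10*(1/10))]
  -- exponential bound
  have hexp : Real.exp D ≤ 1 + D + (47/90)*D^2 := by
    have hb := Real.exp_bound (x := D) (le_trans hDabs (by norm_num)) (n := 3) (by norm_num)
    have hsum : ∑ m ∈ Finset.range 3, D ^ m / (Nat.factorial m : ℝ) = 1 + D + D^2/2 := by
      simp [Finset.sum_range_succ, Nat.factorial]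
    rw [hsum] at hb
    have habs3 : |D|^3 ≤ (1/10)*D^2 := by
      have : |D|^3 = |D| * D^2 := by rw [← sq_abs]; ring
      rw [this]
      exact mul_le_mul_of_nonneg_right hDabs (sq_nonneg D)
    have := (abs_le.1 hb).2
    have hc : (3+1 : ℝ)/((Nat.factorial 3 : ℝ) * 3) = 2/9 := by norm_num [Nat.factorial]
    nlinarith [sq_nonneg D]
  -- key polynomial inequality
  have hkey : D + (47/90)*D^2 ≤ s*(r*R/4) + s^2*(2/3 - R^2/10) := by
    have hpoly := nh_key_poly s R r hs0 hs2 hR hu hr1 hr2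
    have := mul_le_mul_of_nonneg_left hpoly (sq_nonneg s)
    nlinarith [hDval]
  -- combine
  have hE : 0 < Real.exp (R^2/8) := Real.exp_pos _
  have hPhiR : Phi R = Real.exp (R^2/8) := if_pos hR
  have hPhiR' : Phi R' ≤ Real.exp (R'^2/8) := by
    unfold Phi
    split
    · exact le_refl _
    · exact Real.one_le_exp (by positivity)
  have hexpR' : Real.exp (R'^2/8) = Real.exp (R^2/8) * Real.exp D := by
    rw [← Real.exp_add, hDdef]; ring_nf
  have hED : Real.exp D ≤ 1 + (s*(r*R/4) + s^2*(2/3 - R^2/10)) := by linarith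
  have : Real.exp (R'^2/8) ≤ Real.exp (R^2/8) * (1 + (s*(r*R/4) + s^2*(2/3 - R^2/10))) := by
    rw [hexpR']
    exact mul_le_mul_of_nonneg_left hED hE.le
  rw [hPhiR]
  nlinarith [hPhiR', this]
end

section
/- In the scaled one-step NormalHedge setting, if the average potential satisfies 2.31 < Ψ = (1/N)·Σ_{i=1}^N Φ(R_i) < 2.32, then the average potential strictly decreases after one update: Ψ' = (1/N)·Σ_{i=1}^N Φ(R'_i) < Ψ. -/
open Finset

noncomputable def Phi' (x : ℝ) : ℝ := if 0 < x then (x / 4) * Real.exp (x ^ 2 / 8) else 0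

namespace NHAux

noncomputable def psi (x : ℝ) : ℝ := x / 4 * Real.exp (x ^ 2 / 8)

noncomputable def psi' (x : ℝ) : ℝ := (1/4 + x ^ 2 / 16) * Real.exp (x ^ 2 / 8)

lemma Phi_eq (x : ℝ) : Phi x = Real.exp ((max x 0) ^ 2 / 8) := by
  unfold Phi
  rcases lt_or_ge 0 x with h | h
  · rw [if_pos h, max_eq_left h.le]
  · rw [if_neg (not_lt.2 h), max_eq_right h]
    simp

lemma Phi'_eq (x : ℝ) : Phi' x = (max x 0) / 4 * Real.exp ((max x 0) ^ 2 / 8) := by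
  unfold Phi'
  rcases lt_or_ge 0 x with h | h
  · rw [if_pos h, max_eq_left h.le]
  · rw [if_neg (not_lt.2 h), max_eq_right h]
    simp

lemma Phi_one_le (x : ℝ) : 1 ≤ Phi x := by
  rw [Phi_eq]
  calc (1:ℝ) = Real.exp 0 := by simp
  _ ≤ _ := Real.exp_le_exp.2 (by positivity)

lemma Phi_pos (x : ℝ) : 0 < Phi x := lt_of_lt_of_le one_pos (Phi_one_le x)

lemma Phi'_nonneg (x : ℝ) : 0 ≤ Phi' x := by
  rw [Phi'_eq]
  positivity

lemma psi'_pos (x : ℝ) : 0 < psi' x := by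
  unfold psi'
  positivity

lemma log_Phi (x : ℝ) : Real.log (Phi x) = (max x 0) ^ 2 / 8 := by
  rw [Phi_eq, Real.log_exp]

lemma Phi'_mul_self (x : ℝ) : Phi' x * x = 2 * (Phi x * Real.log (Phi x)) := by
  rcases lt_or_ge 0 x with h | h
  · rw [Phi'_eq, log_Phi, Phi_eq, max_eq_left h.le]
    ring
  · rw [Phi'_eq, log_Phi, Phi_eq, max_eq_right h]
    simp

lemma Phi_mono : Monotone Phi := by
  intro x y hxy
  rw [Phi_eq, Phi_eq]
  apply Real.exp_le_exp.2
  have h : max x 0 ≤ max y 0 := max_le_max hxy le_rfl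
  have h0 : 0 ≤ max x 0 := le_max_right _ _
  nlinarith

lemma hasDerivAt_sq_max (x : ℝ) : HasDerivAt (fun y : ℝ => max y 0 ^ 2) (2 * max x 0) x := by
  rcases lt_trichotomy x 0 with h | h | h
  · have hev : (fun y : ℝ => max y 0 ^ 2) =ᶠ[nhds x] fun _ => (0:ℝ) := by
      filter_upwards [Iio_mem_nhds h] with y hy
      rw [max_eq_right (le_of_lt hy)]
      ring
    have h0 : HasDerivAt (fun _ : ℝ => (0:ℝ)) 0 x := hasDerivAt_const x 0
    have := h0.congr_of_eventuallyEq hev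
    rw [max_eq_right h.le]
    exact this.congr_deriv (by ring)
  · subst h
    have h00 : (2:ℝ) * max 0 0 = 0 := by norm_num
    rw [h00, hasDerivAt_iff_isLittleO, Asymptotics.isLittleO_iff]
    intro c hc
    filter_upwards [eventually_abs_sub_lt (0:ℝ) hc] with y hy
    have hy' : |y| < c := by simpa using hy
    have h1 : |max y 0| ≤ |y| := by
      rcases le_or_gt y 0 with h2 | h2
      · rw [max_eq_right h2]; simp
      · rw [max_eq_left h2.le]
    have h0 : (0:ℝ) ≤ max y 0 := le_max_right _ _
    have hgoal : max y 0 ^ 2 - max (0:ℝ) 0 ^ 2 - (y - 0) • (0:ℝ) = max y 0 ^ 2 := by simp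
    rw [hgoal, sub_zero, Real.norm_eq_abs, Real.norm_eq_abs,
      abs_of_nonneg (by positivity : (0:ℝ) ≤ max y 0 ^ 2), sq, ← abs_of_nonneg h0]
    exact mul_le_mul (le_of_lt (lt_of_le_of_lt h1 hy')) h1 (abs_nonneg _) hc.le
  · have hev : (fun y : ℝ => max y 0 ^ 2) =ᶠ[nhds x] fun y => y ^ 2 := by
      filter_upwards [Ioi_mem_nhds h] with y hy
      rw [max_eq_left (le_of_lt hy)]
    have h0 : HasDerivAt (fun y : ℝ => y ^ 2) (2 * x) x := by
      simpa using hasDerivAt_pow 2 x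
    have := h0.congr_of_eventuallyEq hev
    rw [max_eq_left h.le]
    exact this

lemma hasDerivAt_Phi (x : ℝ) : HasDerivAt Phi (Phi' x) x := by
  have h : HasDerivAt (fun y : ℝ => Real.exp (max y 0 ^ 2 / 8))
      (Real.exp (max x 0 ^ 2 / 8) * (2 * max x 0 / 8)) x :=
    ((hasDerivAt_sq_max x).div_const 8).exp
  have heq : Phi = fun y : ℝ => Real.exp (max y 0 ^ 2 / 8) := funext Phi_eq
  rw [heq, Phi'_eq]
  convert h using 1
  ring

lemma continuous_Phi' : Continuous Phi' := by
  have heq : Phi' = fun x : ℝ => (max x 0) / 4 * Real.exp ((max x 0) ^ 2 / 8) :=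
    funext Phi'_eq
  rw [heq]
  fun_prop

lemma continuous_psi' : Continuous psi' := by
  unfold psi'
  fun_prop

lemma hasDerivAt_psi (x : ℝ) : HasDerivAt psi (psi' x) x := by
  have h1 : HasDerivAt (fun y : ℝ => y / 4) (1/4) x := (hasDerivAt_id x).div_const 4
  have h2 : HasDerivAt (fun y : ℝ => Real.exp (y ^ 2 / 8))
      (Real.exp (x ^ 2 / 8) * (2 * x ^ 1 / 8)) x :=
    ((hasDerivAt_pow 2 x).div_const 8).exp
  have := h1.mul h2
  have heq : psi = fun y : ℝ => y / 4 * Real.exp (y ^ 2 / 8) := rfl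
  rw [heq]
  refine this.congr_deriv ?_
  unfold psi'
  ring

lemma psi'_mono {x y : ℝ} (hx : 0 ≤ x) (hxy : x ≤ y) : psi' x ≤ psi' y := by
  unfold psi'
  have hx2 : x ^ 2 ≤ y ^ 2 := by nlinarith
  have h1 : Real.exp (x ^ 2 / 8) ≤ Real.exp (y ^ 2 / 8) := Real.exp_le_exp.2 (by linarith)
  have h2 : (1:ℝ)/4 + x ^ 2 / 16 ≤ 1/4 + y ^ 2 / 16 := by linarith
  have := Real.exp_pos (x ^ 2 / 8)
  nlinarith [Real.exp_pos (y ^ 2 / 8)]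

lemma phi'_sub_le {a t c : ℝ} (hat : a ≤ t) (htc : t ≤ c) :
    Phi' t - Phi' a ≤ psi' c * (t - a) := by
  rcases le_or_gt t 0 with ht | ht
  · have h1 : Phi' t = 0 := by unfold Phi'; rw [if_neg (not_lt.2 ht)]
    have h2 := Phi'_nonneg a
    have h3 := psi'_pos c
    nlinarith
  · have hPt : Phi' t = psi t := by unfold Phi' psi; rw [if_pos ht]
    rcases le_or_gt a 0 with ha | ha
    · have hPa : Phi' a = 0 := by unfold Phi'; rw [if_neg (not_lt.2 ha)]
      rw [hPt, hPa]
      have h1 : psi t ≤ psi' c * t := by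
        unfold psi psi'
        have ht2 : t ^ 2 ≤ c ^ 2 := by nlinarith
        have h2 : Real.exp (t ^ 2 / 8) ≤ Real.exp (c ^ 2 / 8) := Real.exp_le_exp.2 (by linarith)
        have h3 := Real.exp_pos (t ^ 2 / 8)
        have h4 := Real.exp_pos (c ^ 2 / 8)
        nlinarith [mul_le_mul_of_nonneg_left h2 (by positivity : (0:ℝ) ≤ t / 4),
          mul_nonneg (mul_nonneg ht.le (by positivity : (0:ℝ) ≤ c ^ 2 / 16)) h4.le]
      have h5 : psi' c * t ≤ psi' c * (t - a) := by
        have := psi'_pos c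
        nlinarith
      linarith
    · -- 0 < a ≤ t : MVT via FTC on psi
      have hPa : Phi' a = psi a := by unfold Phi' psi; rw [if_pos ha]
      rw [hPt, hPa]
      have hFTC : ∫ u in a..t, psi' u = psi t - psi a := by
        apply intervalIntegral.integral_eq_sub_of_hasDerivAt
        · intro u _
          exact hasDerivAt_psi u
        · exact continuous_psi'.intervalIntegrable a t
      have hmono : ∫ u in a..t, psi' u ≤ ∫ u in a..t, psi' c := by
        apply intervalIntegral.integral_mono_on hat
          (continuous_psi'.intervalIntegrable a t)
          (intervalIntegrable_const)
        intro u hu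
        exact psi'_mono (le_trans ha.le hu.1) (le_trans hu.2 htc)
      rw [hFTC] at hmono
      rw [intervalIntegral.integral_const] at hmono
      simp only [smul_eq_mul] at hmono
      nlinarith

lemma integral_linear (a b K : ℝ) :
    ∫ t in a..b, K * (t - a) = K * ((b - a) ^ 2 / 2) := by
  rw [intervalIntegral.integral_comp_sub_right (fun u => K * u) a,
    intervalIntegral.integral_const_mul, integral_id]
  ring

lemma integral_linear' (a b K : ℝ) :
    ∫ t in b..a, K * (a - t) = K * ((a - b) ^ 2 / 2) := by
  simp only [show ∀ t : ℝ, K * (a - t) = K * -(t - a) from fun t => by ring]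
  rw [intervalIntegral.integral_comp_sub_right (fun u => K * -u) a,
    intervalIntegral.integral_const_mul, intervalIntegral.integral_neg, integral_id]
  ring

lemma taylor (a b : ℝ) :
    Phi b ≤ Phi a + Phi' a * (b - a) + psi' (max (max a b) 0) / 2 * (b - a) ^ 2 := by
  set c := max (max a b) 0 with hc
  have hca : a ≤ c := le_trans (le_max_left a b) (le_max_left _ _)
  have hcb : b ≤ c := le_trans (le_max_right a b) (le_max_left _ _)
  have hFTC : ∫ t in a..b, Phi' t = Phi b - Phi a := by
    apply intervalIntegral.integral_eq_sub_of_hasDerivAt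
    · intro u _
      exact hasDerivAt_Phi u
    · exact continuous_Phi'.intervalIntegrable a b
  rcases le_total a b with hab | hab
  · have h1 : ∫ t in a..b, (Phi' t - Phi' a) ≤ ∫ t in a..b, psi' c * (t - a) := by
      apply intervalIntegral.integral_mono_on hab
        ((continuous_Phi'.sub continuous_const).intervalIntegrable a b)
        ((by fun_prop : Continuous fun t : ℝ => psi' c * (t - a)).intervalIntegrable a b)
      intro u hu
      exact phi'_sub_le hu.1 (le_trans hu.2 hcb)
    have h2 : ∫ t in a..b, (Phi' t - Phi' a) = (Phi b - Phi a) - (b - a) * Phi' a := by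
      rw [intervalIntegral.integral_sub (continuous_Phi'.intervalIntegrable a b)
        intervalIntegrable_const, hFTC, intervalIntegral.integral_const]
      simp [smul_eq_mul]
    rw [h2, integral_linear] at h1
    nlinarith
  · -- b ≤ a
    have h1 : ∫ t in b..a, (Phi' a - Phi' t) ≤ ∫ t in b..a, psi' c * (a - t) := by
      apply intervalIntegral.integral_mono_on hab
        ((continuous_const.sub continuous_Phi').intervalIntegrable b a)
        ((by fun_prop : Continuous fun t : ℝ => psi' c * (a - t)).intervalIntegrable b a)
      intro u hu
      have := phi'_sub_le hu.2 hca
      show Phi' a - Phi' u ≤ psi' c * (a - u)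
      linarith
    have hFTC' : ∫ t in b..a, Phi' t = Phi a - Phi b := by
      apply intervalIntegral.integral_eq_sub_of_hasDerivAt
      · intro u _
        exact hasDerivAt_Phi u
      · exact continuous_Phi'.intervalIntegrable b a
    have h2 : ∫ t in b..a, (Phi' a - Phi' t) = (a - b) * Phi' a - (Phi a - Phi b) := by
      rw [intervalIntegral.integral_sub intervalIntegrable_const
        (continuous_Phi'.intervalIntegrable b a), hFTC', intervalIntegral.integral_const]
      simp [smul_eq_mul]
    rw [h2, integral_linear'] at h1
    nlinarith

lemma exp_mul_one_sub_le (x : ℝ) : Real.exp x * (1 - x) ≤ 1 := by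
  have h := Real.add_one_le_exp (-x)
  have h3 : Real.exp (-x) * Real.exp x = 1 := by rw [← Real.exp_add]; simp
  nlinarith [Real.exp_pos x, mul_le_mul_of_nonneg_left h (Real.exp_pos x).le]

lemma exp_017_lb : (1.177225:ℝ) ≤ Real.exp 0.17 := by
  have h1 : (1.085:ℝ) ≤ Real.exp 0.085 := by
    have := Real.add_one_le_exp (0.085:ℝ); linarith
  have h2 : Real.exp 0.17 = Real.exp 0.085 * Real.exp 0.085 := by
    rw [← Real.exp_add]; norm_num
  nlinarith

lemma exp_02_lb : (1.2:ℝ) ≤ Real.exp 0.2 := by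
  have := Real.add_one_le_exp (0.2:ℝ); linarith

lemma exp_083_ub : Real.exp 0.83 ≤ 2.31 := by
  have key : Real.exp 0.83 * Real.exp 0.17 = Real.exp 1 := by
    rw [← Real.exp_add]; norm_num
  nlinarith [Real.exp_pos (0.83:ℝ), Real.exp_one_lt_d9, exp_017_lb]

lemma exp_08_ub : Real.exp 0.8 ≤ 2.32 := by
  have key : Real.exp 0.8 * Real.exp 0.2 = Real.exp 1 := by
    rw [← Real.exp_add]; norm_num
  nlinarith [Real.exp_pos (0.8:ℝ), Real.exp_one_lt_d9, exp_02_lb]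

lemma log_231_lb : (0.83:ℝ) ≤ Real.log 2.31 := by
  rw [Real.le_log_iff_exp_le (by norm_num : (0:ℝ) < 2.31)]
  exact exp_083_ub

lemma tangent_lemma {t : ℝ} (ht : 0 < t) : 1.83 * t - 2.31 ≤ t * Real.log t := by
  have h231 : (0:ℝ) < 2.31 := by norm_num
  have h := Real.log_le_sub_one_of_pos (div_pos h231 ht)
  rw [Real.log_div (by norm_num) (ne_of_gt ht)] at h
  have h2 := mul_le_mul_of_nonneg_left h ht.le
  have h3 : t * ((2.31:ℝ) / t - 1) = 2.31 - t := by field_simp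
  rw [h3] at h2
  have h4 : 0 ≤ (Real.log 2.31 - 0.83) * t := mul_nonneg (by linarith [log_231_lb]) ht.le
  nlinarith

lemma exp_0534_ub : Real.exp 0.0534 ≤ 1.057 := by
  have h := exp_mul_one_sub_le (0.0534:ℝ)
  nlinarith [Real.exp_pos (0.0534:ℝ)]

lemma exp_half_le {α : ℝ} (hα0 : 0 < α) (hα640 : α ≤ 1/640) :
    Real.exp (α / 2) ≤ 1 + 0.65 * α := by
  have h1 := exp_mul_one_sub_le (α / 2)
  nlinarith [Real.exp_pos (α / 2)]

lemma coeff_ineq {α E A : ℝ} (hα : 0 ≤ α) (hE : 0 ≤ E) (hA : 0 ≤ A) :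
    ((1/4 + (A + 0.427) / 16) * (E * 1.057)) / 2 * (4.41 * α)
      ≤ α * (E * (0.65 + 1.17 * (A / 8))) := by
  have h1 : (1/4 + (A + 0.427) / 16) * 1.057 / 2 * 4.41 ≤ 0.65 + 1.17 * (A / 8) := by
    linarith
  calc ((1/4 + (A + 0.427) / 16) * (E * 1.057)) / 2 * (4.41 * α)
      = (α * E) * ((1/4 + (A + 0.427) / 16) * 1.057 / 2 * 4.41) := by ring
  _ ≤ (α * E) * (0.65 + 1.17 * (A / 8)) :=
      mul_le_mul_of_nonneg_left h1 (mul_nonneg hα hE)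
  _ = α * (E * (0.65 + 1.17 * (A / 8))) := by ring

lemma key_neg {α s a b : ℝ} (hα0 : 0 < α) (hα640 : α ≤ 1/640) (hs0 : 0 ≤ s)
    (hs2 : s ^ 2 = α) (hnega : a ≤ 0) (hb : b ≤ 2 * s) :
    Phi b ≤ Phi a + Phi' a * (b - a)
      + α * (Phi a * (0.65 + 1.17 * Real.log (Phi a))) := by
  have hPa : Phi a = 1 := by unfold Phi; rw [if_neg (not_lt.2 hnega)]
  have hPa' : Phi' a = 0 := by unfold Phi'; rw [if_neg (not_lt.2 hnega)]
  have hmono := Phi_mono hb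
  have hval : Phi (2 * s) = Real.exp (α / 2) := by
    rw [Phi_eq, max_eq_left (by positivity : (0:ℝ) ≤ 2 * s)]
    congr 1
    have h4 : (2 * s) ^ 2 = 4 * α := by rw [mul_pow, hs2]; norm_num
    rw [h4]; ring
  rw [hPa, hPa']
  simp only [Real.log_one]
  calc Phi b ≤ Real.exp (α / 2) := hval ▸ hmono
  _ ≤ 1 + 0.65 * α := exp_half_le hα0 hα640
  _ = 1 + 0 * (b - a) + α * (1 * (0.65 + 1.17 * 0)) := by ring

set_option maxHeartbeats 1000000 in
lemma key_pos {α s a b L : ℝ} (hα0 : 0 < α) (hs0 : 0 ≤ s) (hs2 : s ^ 2 = α)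
    (hα800 : α * (800 * L) < 1) (hLlb : 0.8 ≤ L) (hpos : 0 < a) (ha2 : a ^ 2 ≤ 8 * L)
    (he : |b - a + α * a| ≤ 2 * s) :
    Phi b ≤ Phi a + Phi' a * (b - a)
      + α * (Phi a * (0.65 + 1.17 * Real.log (Phi a))) := by
  have hα640 : α ≤ 1/640 := by
    nlinarith [mul_nonneg hα0.le (by linarith : (0:ℝ) ≤ 800 * L - 640)]
  have hm : max a 0 = a := max_eq_left hpos.le
  have hF : Phi a = Real.exp (a ^ 2 / 8) := by rw [Phi_eq, hm]
  have hlogF : Real.log (Phi a) = a ^ 2 / 8 := by rw [log_Phi, hm]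
  have h1 : α * a ^ 2 ≤ 1 / 100 := by
    have e1 := mul_le_mul_of_nonneg_left ha2 hα0.le
    have e2 : α * (8 * L) = α * (800 * L) / 100 := by ring
    linarith
  have hsa2 : (s * a) ^ 2 ≤ 1 / 100 := by
    have : (s * a) ^ 2 = α * a ^ 2 := by rw [mul_pow, hs2]
    linarith
  have h2 : s * a ≤ 1 / 10 := by
    nlinarith [hsa2, mul_nonneg hs0 hpos.le]
  have hδabs : |b - a| ≤ α * a + 2 * s := by
    have h3 : b - a = -(α * a) + (b - a + α * a) := by ring
    rw [h3]
    calc |(-(α * a)) + (b - a + α * a)| ≤ |(-(α * a))| + |b - a + α * a| := abs_add_le _ _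
    _ ≤ α * a + 2 * s := by
        rw [abs_neg, abs_of_nonneg (by positivity : (0:ℝ) ≤ α * a)]
        linarith
  have hsq : (α * a + 2 * s) ^ 2 ≤ 4.41 * α := by
    have e1 := mul_le_mul_of_nonneg_left h1 hα0.le
    have e2 := mul_le_mul_of_nonneg_left h2 hα0.le
    have e3 : (α * a + 2 * s) ^ 2 = α * (α * a ^ 2) + 4 * (α * (s * a)) + 4 * s ^ 2 := by
      ring
    linarith [hs2.ge, hs2.le]
  have hδ2 : (b - a) ^ 2 ≤ 4.41 * α := by
    have h4 := abs_le.1 hδabs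
    have h3 : (b - a) ^ 2 ≤ (α * a + 2 * s) ^ 2 := sq_le_sq' h4.1 h4.2
    linarith
  set c := max (max a b) 0 with hcdef
  have hc0 : (0:ℝ) ≤ c := le_max_right _ _
  have hcub : c ≤ a + (α * a + 2 * s) := by
    apply max_le (max_le _ _) _
    · have : (0:ℝ) ≤ α * a + 2 * s := by positivity
      linarith
    · have hb' : b ≤ a + |b - a| := by
        have := le_abs_self (b - a); linarith
      linarith
    · have : (0:ℝ) ≤ α * a + 2 * s := by positivity
      linarith
  have hc2 : c ^ 2 ≤ a ^ 2 + 0.427 := by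
    have h3 : c ^ 2 ≤ (a + (α * a + 2 * s)) ^ 2 := by
      have := mul_self_le_mul_self hc0 hcub
      nlinarith [this]
    have hd : a * (α * a + 2 * s) ≤ 0.21 := by
      have e4 : a * (α * a + 2 * s) = α * a ^ 2 + 2 * (s * a) := by ring
      linarith
    have hdsq : (α * a + 2 * s) ^ 2 ≤ 4.41 / 640 := by
      have : 4.41 * α ≤ 4.41 / 640 := by linarith
      linarith
    have hexp3 : (a + (α * a + 2 * s)) ^ 2
        = a ^ 2 + 2 * (a * (α * a + 2 * s)) + (α * a + 2 * s) ^ 2 := by ring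
    linarith
  have hexpc : Real.exp (c ^ 2 / 8) ≤ Real.exp (a ^ 2 / 8) * 1.057 := by
    have h3 : Real.exp (c ^ 2 / 8) ≤ Real.exp (a ^ 2 / 8 + 0.0534) :=
      Real.exp_le_exp.2 (by linarith)
    rw [Real.exp_add] at h3
    calc Real.exp (c ^ 2 / 8) ≤ Real.exp (a ^ 2 / 8) * Real.exp 0.0534 := h3
    _ ≤ Real.exp (a ^ 2 / 8) * 1.057 :=
        mul_le_mul_of_nonneg_left exp_0534_ub (Real.exp_pos _).le
  have htay := taylor a b
  rw [← hcdef] at htay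
  have hpsic : psi' c ≤ (1/4 + (a ^ 2 + 0.427) / 16) * (Real.exp (a ^ 2 / 8) * 1.057) := by
    unfold psi'
    apply mul_le_mul (by linarith) hexpc (Real.exp_pos _).le (by positivity)
  have hrem : psi' c / 2 * (b - a) ^ 2 ≤ α * (Phi a * (0.65 + 1.17 * (a ^ 2 / 8))) := by
    have h5 : psi' c / 2 * (b - a) ^ 2
        ≤ ((1/4 + (a ^ 2 + 0.427) / 16) * (Real.exp (a ^ 2 / 8) * 1.057)) / 2 * (4.41 * α) := by
      apply mul_le_mul (by linarith) hδ2 (sq_nonneg _)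
      positivity
    have h6 := coeff_ineq (E := Real.exp (a ^ 2 / 8)) (A := a ^ 2)
      hα0.le (Real.exp_pos _).le (sq_nonneg a)
    rw [hF]
    linarith
  rw [hlogF]
  linarith [htay, hrem]

end NHAux

set_option maxHeartbeats 2000000 in
open NHAux in
/-- if the average potential lies strictly between 2.31 and 2.32, then it
strictly decreases after one scaled NormalHedge update. -/
theorem normalHedge_average_potential_decreases

    (N : ℕ) (hN : 1 ≤ N)
    (α : ℝ) (hα0 : 0 < α) (hα : α < 1 / (800 * Real.log (2.32 * N)))
    (R g : Fin N → ℝ) (hg : ∀ i, |g i| ≤ Real.sqrt α)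
    (p : Fin N → ℝ)
    (hp : ∀ i, p i =
      if 0 < ∑ k, Phi' (R k) then Phi' (R i) / ∑ k, Phi' (R k) else 1 / N)
    (gA : ℝ) (hgA : gA = ∑ i, p i * g i)
    (R' : Fin N → ℝ) (hR' : ∀ i, R' i = (1 - α) * R i + g i - gA)
    (hΨlo : 2.31 < (1 / (N : ℝ)) * ∑ i, Phi (R i))
    (hΨhi : (1 / (N : ℝ)) * ∑ i, Phi (R i) < 2.32) :
    (1 / (N : ℝ)) * ∑ i, Phi (R' i) < (1 / (N : ℝ)) * ∑ i, Phi (R i) := by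
  have hN0 : (0:ℝ) < N := by
    have : (1:ℝ) ≤ N := by exact_mod_cast hN
    linarith
  set L := Real.log (2.32 * N) with hLdef
  have hN1 : (1:ℝ) ≤ N := by exact_mod_cast hN
  have h232N : (2.32:ℝ) ≤ 2.32 * N := by nlinarith
  have hLlb : (0.8:ℝ) ≤ L := by
    rw [hLdef, Real.le_log_iff_exp_le (mul_pos (by norm_num) hN0)]
    exact le_trans exp_08_ub h232N
  have hLpos : (0:ℝ) < L := lt_of_lt_of_le (by norm_num) hLlb
  have hα800 : α * (800 * L) < 1 := by
    have hden : (0:ℝ) < 800 * L := by linarith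
    calc α * (800 * L) < (1 / (800 * L)) * (800 * L) :=
          mul_lt_mul_of_pos_right hα hden
    _ = 1 := by field_simp
  have hα640 : α ≤ 1/640 := by
    nlinarith [mul_nonneg hα0.le (by linarith : (0:ℝ) ≤ 800 * L - 640)]
  set s := Real.sqrt α with hsdef
  have hs0 : 0 ≤ s := Real.sqrt_nonneg α
  have hs2 : s ^ 2 = α := Real.sq_sqrt hα0.le
  -- sum bounds
  have hNinv : (N:ℝ) * ((1 / (N : ℝ)) * ∑ i, Phi (R i)) = ∑ i, Phi (R i) := by
    field_simp
  have hsum_lb : 2.31 * N ≤ ∑ i, Phi (R i) := by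
    have h := mul_le_mul_of_nonneg_left hΨlo.le hN0.le
    rw [hNinv] at h
    linarith
  have hsum_ub : ∑ i, Phi (R i) ≤ 2.32 * N := by
    have h := mul_le_mul_of_nonneg_left hΨhi.le hN0.le
    rw [hNinv] at h
    linarith
  -- the normalizer is positive
  have hSnn : (0:ℝ) ≤ ∑ k, Phi' (R k) := sum_nonneg fun k _ => Phi'_nonneg _
  have hS : (0:ℝ) < ∑ k, Phi' (R k) := by
    rcases hSnn.lt_or_eq with h | h
    · exact h
    · exfalso
      have hz : ∀ k ∈ univ, Phi' (R k) = 0 :=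
        (sum_eq_zero_iff_of_nonneg fun k _ => Phi'_nonneg _).1 h.symm
      have hone : ∀ k : Fin N, Phi (R k) = 1 := by
        intro k
        have hk := hz k (mem_univ k)
        have hRk : R k ≤ 0 := by
          by_contra hpos
          push_neg at hpos
          have : (0:ℝ) < Phi' (R k) := by
            unfold Phi'; rw [if_pos hpos]; positivity
          linarith
        unfold Phi; rw [if_neg (not_lt.2 hRk)]
      have hsum1 : ∑ i, Phi (R i) = N := by
        rw [sum_congr rfl fun i _ => hone i]
        simp
      rw [hsum1] at hsum_lb
      nlinarith
  have hSne : (∑ k, Phi' (R k)) ≠ 0 := ne_of_gt hS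
  have hp' : ∀ i, p i = Phi' (R i) / ∑ k, Phi' (R k) := fun i => by
    rw [hp i, if_pos hS]
  have hpnn : ∀ i, 0 ≤ p i := fun i => by
    rw [hp' i]; exact div_nonneg (Phi'_nonneg _) hSnn
  have hpsum : ∑ i, p i = 1 := by
    rw [sum_congr rfl fun i _ => hp' i, ← sum_div, div_self hSne]
  have hgAabs : |gA| ≤ s := by
    rw [hgA]
    calc |∑ i, p i * g i| ≤ ∑ i, |p i * g i| := abs_sum_le_sum_abs _ _
    _ ≤ ∑ i, p i * s := by
        apply sum_le_sum
        intro i _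
        rw [abs_mul, abs_of_nonneg (hpnn i)]
        exact mul_le_mul_of_nonneg_left (hg i) (hpnn i)
    _ = s := by rw [← sum_mul, hpsum, one_mul]
  -- first-order cancellation
  have hgS : ∑ i, Phi' (R i) * g i = gA * ∑ k, Phi' (R k) := by
    have h0 : ∀ i : Fin N, p i * g i = Phi' (R i) * g i / ∑ k, Phi' (R k) := by
      intro i; rw [hp' i]; ring
    have h1 : gA = (∑ i, Phi' (R i) * g i) / ∑ k, Phi' (R k) := by
      rw [hgA, sum_congr rfl fun i _ => h0 i, ← sum_div]
    rw [h1]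
    field_simp
  have hcancel : ∑ i, Phi' (R i) * (g i - gA) = 0 := by
    rw [sum_congr rfl fun i _ =>
      (by ring : Phi' (R i) * (g i - gA) = Phi' (R i) * g i - Phi' (R i) * gA),
      sum_sub_distrib, hgS, ← sum_mul]
    ring
  have hT1 : ∑ i, Phi' (R i) * (R' i - R i)
      = -(2 * α * ∑ i, Phi (R i) * Real.log (Phi (R i))) := by
    have h1 : ∀ i, Phi' (R i) * (R' i - R i)
        = -α * (Phi' (R i) * R i) + Phi' (R i) * (g i - gA) := by
      intro i; rw [hR' i]; ring
    rw [sum_congr rfl fun i _ => h1 i, sum_add_distrib, hcancel, add_zero, ← mul_sum,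
      sum_congr rfl fun i _ => Phi'_mul_self (R i), ← mul_sum]
    ring
  -- the per-coordinate key bound
  have key : ∀ i, Phi (R' i) ≤ Phi (R i) + Phi' (R i) * (R' i - R i)
      + α * (Phi (R i) * (0.65 + 1.17 * Real.log (Phi (R i)))) := by
    intro i
    have habs_e : |g i - gA| ≤ 2 * s := by
      calc |g i - gA| ≤ |g i| + |gA| := by
            simpa [sub_eq_add_neg, abs_neg] using abs_add_le (g i) (-gA)
      _ ≤ s + s := add_le_add (hg i) hgAabs
      _ = 2 * s := by ring
    rcases le_or_gt (R i) 0 with hneg | hpos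
    · apply key_neg hα0 hα640 hs0 hs2 hneg
      rw [hR' i]
      have h1 : (1 - α) * R i ≤ 0 :=
        mul_nonpos_of_nonneg_of_nonpos (by linarith) hneg
      have h2 : g i - gA ≤ 2 * s := le_trans (le_abs_self _) habs_e
      linarith
    · have hFub : Phi (R i) ≤ 2.32 * N := by
        have h1 : Phi (R i) ≤ ∑ j, Phi (R j) :=
          single_le_sum (f := fun j => Phi (R j)) (fun j _ => (Phi_pos _).le) (mem_univ i)
        linarith
      have ha2 : (R i) ^ 2 ≤ 8 * L := by
        have hFe : Phi (R i) = Real.exp ((R i) ^ 2 / 8) := by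
          rw [Phi_eq, max_eq_left hpos.le]
        have h1 : Real.exp ((R i) ^ 2 / 8) ≤ Real.exp L := by
          rw [hLdef, Real.exp_log (mul_pos (by norm_num) hN0)]
          rw [← hFe]; exact hFub
        have := Real.exp_le_exp.1 h1
        linarith
      apply key_pos hα0 hs0 hs2 hα800 hLlb hpos ha2
      have h3 : R' i - R i + α * R i = g i - gA := by rw [hR' i]; ring
      rw [h3]
      exact habs_e
  -- assemble the sums
  have hsum' := sum_le_sum fun i (_ : i ∈ univ) => key i
  rw [sum_add_distrib, sum_add_distrib, hT1, ← mul_sum] at hsum'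
  set P := ∑ i, Phi (R i) with hPdef
  set Q := ∑ i, Phi (R i) * Real.log (Phi (R i)) with hQdef
  have hsplit : ∑ i, Phi (R i) * (0.65 + 1.17 * Real.log (Phi (R i)))
      = 0.65 * P + 1.17 * Q := by
    rw [sum_congr rfl fun i _ =>
      (by ring : Phi (R i) * (0.65 + 1.17 * Real.log (Phi (R i)))
        = 0.65 * Phi (R i) + 1.17 * (Phi (R i) * Real.log (Phi (R i)))),
      sum_add_distrib, ← mul_sum, ← mul_sum]
  rw [hsplit] at hsum'
  have htan : 1.83 * P - 2.31 * N ≤ Q := by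
    have hstep : ∑ i : Fin N, (1.83 * Phi (R i) - 2.31) ≤ Q :=
      sum_le_sum fun i _ => tangent_lemma (Phi_pos (R i))
    have hval : ∑ i : Fin N, (1.83 * Phi (R i) - 2.31) = 1.83 * P - 2.31 * N := by
      rw [sum_sub_distrib, ← mul_sum, sum_const, card_univ, Fintype.card_fin]
      ring
    rw [hval] at hstep
    linarith
  have hfin : -(2 * α * Q) + α * (0.65 * P + 1.17 * Q) < 0 := by
    have hlin : 0.65 * P - 0.83 * Q ≤ -(0.0898) * N := by
      linarith [htan, hsum_lb]
    have h6 := mul_le_mul_of_nonneg_left hlin hα0.le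
    have h7 : (0:ℝ) < α * (0.0898 * N) := by positivity
    nlinarith
  have hfinal : ∑ i, Phi (R' i) < P := by linarith
  have h1N : (0:ℝ) < 1 / (N:ℝ) := by positivity
  calc (1 / (N:ℝ)) * ∑ i, Phi (R' i) < (1 / (N:ℝ)) * P :=
        mul_lt_mul_of_pos_left hfinal h1N
  _ = (1 / (N:ℝ)) * ∑ i, Phi (R i) := by rw [hPdef]
end

section
/- Let n ≥ 1 and B ≥ 1. For all real numbers x₁,…,xₙ satisfying the constraint (1/n)·Σ_{i=1}^n exp(x_i²/8) ≥ B, the function f(x₁,…,xₙ) = Σ_{i=1}^n (2/3 − x_i²/10)·exp(x_i²/8) satisfies f(x₁,…,xₙ) ≤ n·B·(2/3 − (4/5)·ln B); the maximum is attained when x_i = √(8·ln B) for all i. -/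
open Finset

lemma tangent_bound (B y : ℝ) (hB : 1 ≤ B) (hy : 0 < y) :
    (2 / 3 - (4 / 5) * Real.log y) * y ≤
      B * (2 / 3 - (4 / 5) * Real.log B) + (-2 / 15 - (4 / 5) * Real.log B) * (y - B) := by
  have hBpos : (0:ℝ) < B := lt_of_lt_of_le one_pos hB
  have h1 : Real.log (B / y) ≤ B / y - 1 := Real.log_le_sub_one_of_pos (by positivity)
  have h2 : Real.log (B / y) = Real.log B - Real.log y := Real.log_div (ne_of_gt hBpos) (ne_of_gt hy)
  have h3 : y * (Real.log B - Real.log y) ≤ y * (B / y - 1) := by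
    apply mul_le_mul_of_nonneg_left (h2 ▸ h1) hy.le
  have h4 : y * (B / y - 1) = B - y := by field_simp
  nlinarith [h3, h4]

/-- for `n ≥ 1` and `B ≥ 1`, subject to `(1/n)·Σᵢ exp(xᵢ²/8) ≥ B`, the
function `f(x) = Σᵢ (2/3 - xᵢ²/10)·exp(xᵢ²/8)` is at most `n·B·(2/3 - (4/5)·ln B)`,
and the maximum is attained when `xᵢ = √(8·ln B)` for all `i`. -/
theorem constrained_potential_maximization
    (n : ℕ) (hn : 1 ≤ n) (B : ℝ) (hB : 1 ≤ B) :
    (∀ x : Fin n → ℝ,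
      (1 / (n : ℝ)) * ∑ i, Real.exp ((x i) ^ 2 / 8) ≥ B →
      ∑ i, (2 / 3 - (x i) ^ 2 / 10) * Real.exp ((x i) ^ 2 / 8) ≤
        n * B * (2 / 3 - (4 / 5) * Real.log B)) ∧
    (∀ x : Fin n → ℝ, (∀ i, x i = Real.sqrt (8 * Real.log B)) →
      (1 / (n : ℝ)) * ∑ i, Real.exp ((x i) ^ 2 / 8) ≥ B ∧
      ∑ i, (2 / 3 - (x i) ^ 2 / 10) * Real.exp ((x i) ^ 2 / 8) =
        n * B * (2 / 3 - (4 / 5) * Real.log B)) := by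
  have hnpos : (0:ℝ) < n := by exact_mod_cast hn
  have hlogB : 0 ≤ Real.log B := Real.log_nonneg hB
  constructor
  · intro x hx
    have hsum : (n:ℝ) * B ≤ ∑ i, Real.exp ((x i) ^ 2 / 8) := by
      have := mul_le_mul_of_nonneg_left hx hnpos.le
      calc (n:ℝ) * B ≤ (n:ℝ) * ((1 / (n:ℝ)) * ∑ i, Real.exp ((x i) ^ 2 / 8)) := this
        _ = ∑ i, Real.exp ((x i) ^ 2 / 8) := by field_simp
    have key : ∀ i : Fin n,
        (2 / 3 - (x i) ^ 2 / 10) * Real.exp ((x i) ^ 2 / 8) ≤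
          B * (2 / 3 - (4 / 5) * Real.log B) +
            (-2 / 15 - (4 / 5) * Real.log B) * (Real.exp ((x i) ^ 2 / 8) - B) := by
      intro i
      have h := tangent_bound B (Real.exp ((x i) ^ 2 / 8)) hB (Real.exp_pos _)
      rw [Real.log_exp] at h
      have : (2 / 3 - (x i) ^ 2 / 10) = (2 / 3 - (4 / 5) * ((x i) ^ 2 / 8)) := by ring
      rw [this]; exact h
    calc ∑ i, (2 / 3 - (x i) ^ 2 / 10) * Real.exp ((x i) ^ 2 / 8)
        ≤ ∑ i : Fin n, (B * (2 / 3 - (4 / 5) * Real.log B) +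
            (-2 / 15 - (4 / 5) * Real.log B) * (Real.exp ((x i) ^ 2 / 8) - B)) :=
          Finset.sum_le_sum fun i _ => key i
      _ = n * (B * (2 / 3 - (4 / 5) * Real.log B)) +
            (-2 / 15 - (4 / 5) * Real.log B) * ((∑ i, Real.exp ((x i) ^ 2 / 8)) - n * B) := by
          rw [Finset.sum_add_distrib, Finset.sum_const, card_univ, Fintype.card_fin,
            ← Finset.mul_sum, Finset.sum_sub_distrib, Finset.sum_const, card_univ,
            Fintype.card_fin, nsmul_eq_mul, nsmul_eq_mul]
      _ ≤ n * (B * (2 / 3 - (4 / 5) * Real.log B)) + 0 := by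
          have hc : (-2 / 15 - (4 / 5) * Real.log B) ≤ 0 := by nlinarith
          have hd : 0 ≤ (∑ i, Real.exp ((x i) ^ 2 / 8)) - n * B := by linarith
          nlinarith
      _ = n * B * (2 / 3 - (4 / 5) * Real.log B) := by ring
  · intro x hx
    have hsq : ∀ i, (x i) ^ 2 = 8 * Real.log B := by
      intro i; rw [hx i, Real.sq_sqrt (by positivity)]
    have hexp : ∀ i, Real.exp ((x i) ^ 2 / 8) = B := by
      intro i; rw [hsq i]
      rw [show (8 * Real.log B) / 8 = Real.log B by ring, Real.exp_log (by linarith)]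
    constructor
    · have : ∑ i, Real.exp ((x i) ^ 2 / 8) = n * B := by
        simp [hexp]
      rw [this]
      rw [ge_iff_le]
      calc B = (1 / (n:ℝ)) * ((n:ℝ) * B) := by field_simp
        _ ≤ _ := le_refl _
    · have : ∀ i : Fin n, (2 / 3 - (x i) ^ 2 / 10) * Real.exp ((x i) ^ 2 / 8) =
          B * (2 / 3 - (4 / 5) * Real.log B) := by
        intro i; rw [hexp i, hsq i]; ring
      rw [Finset.sum_congr rfl fun i _ => this i, Finset.sum_const, card_univ,
        Fintype.card_fin, nsmul_eq_mul]
      ring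
end

section
/- In the discounted Hedge setting, for every k with 1 ≤ k ≤ j−1, the per-step increase of the log-weight-sum satisfies ln(W_{k+1}/W_k) ≤ η·(1−α)^{j−1−k}·g_A^k + (η²/2)·(1−α)^{2(j−1−k)}. -/
open Finset

/-- Adjusted cumulative gain of action `i` at the start of round `k` (horizon `j`):
`Ĝ_i^k = Σ_{s=1}^{k-1} (1-α)^{j-1-s}·g_i^s`. -/
noncomputable def Ghat {N : ℕ} (α : ℝ) (j : ℕ) (g : Fin N → ℕ → ℝ)
    (i : Fin N) (k : ℕ) : ℝ :=
  ∑ s ∈ Finset.Icc 1 (k - 1), (1 - α) ^ (j - 1 - s) * g i s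

/-- Hedge's gain in round `k`:
`g_A^k = (Σᵢ e^{η·Ĝ_i^k}·g_i^k) / (Σᵢ e^{η·Ĝ_i^k})`. -/
noncomputable def hedgeGain {N : ℕ} (α η : ℝ) (j : ℕ) (g : Fin N → ℕ → ℝ)
    (k : ℕ) : ℝ :=
  (∑ i, Real.exp (η * Ghat α j g i k) * g i k) /
    ∑ i, Real.exp (η * Ghat α j g i k)

/-- Hedge's adjusted cumulative gain at the start of round `j`:
`Ĝ_A^j = Σ_{s=1}^{j-1} (1-α)^{j-1-s}·g_A^s`. -/
noncomputable def GhatA {N : ℕ} (α η : ℝ) (j : ℕ) (g : Fin N → ℕ → ℝ) : ℝ :=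
  ∑ s ∈ Finset.Icc 1 (j - 1), (1 - α) ^ (j - 1 - s) * hedgeGain α η j g s

/-- The weight sum at the start of round `k`: `W_k = Σᵢ e^{η·Ĝ_i^k}`. -/
noncomputable def Wsum {N : ℕ} (α η : ℝ) (j : ℕ) (g : Fin N → ℕ → ℝ) (k : ℕ) : ℝ :=
  ∑ i, Real.exp (η * Ghat α j g i k)

lemma lse_hoeffding {N : ℕ} (hN : 0 < N) (w x : Fin N → ℝ)
    (hw : ∀ i, 0 < w i) (hx : ∀ i, x i * x i ≤ 1) (c : ℝ) (hc : 0 ≤ c) :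
    Real.log (∑ i, w i * Real.exp (c * x i)) - Real.log (∑ i, w i) ≤
      c * ((∑ i, w i * x i) / (∑ i, w i)) + c ^ 2 / 2 := by
  have hne : Nonempty (Fin N) := Fin.pos_iff_nonempty.mp hN
  set A : ℝ → ℝ := fun t => ∑ i, w i * Real.exp (t * x i) with hAdef
  set B : ℝ → ℝ := fun t => ∑ i, w i * (Real.exp (t * x i) * x i) with hBdef
  set C : ℝ → ℝ := fun t => ∑ i, w i * (Real.exp (t * x i) * x i * x i) with hCdef
  have hApos : ∀ t, 0 < A t := fun t =>
    Finset.sum_pos (fun i _ => mul_pos (hw i) (Real.exp_pos _)) Finset.univ_nonempty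
  have hA : ∀ t, HasDerivAt A (B t) t := fun t =>
    HasDerivAt.fun_sum fun i _ => ((hasDerivAt_mul_const (x i)).exp.const_mul (w i))
  have hB : ∀ t, HasDerivAt B (C t) t := fun t =>
    HasDerivAt.fun_sum fun i _ =>
      (((hasDerivAt_mul_const (x i)).exp.mul_const (x i)).const_mul (w i))
  set ψ : ℝ → ℝ := fun t => B 0 / A 0 + t - B t / A t with hψdef
  have hψ : ∀ t, HasDerivAt ψ (1 - (C t * A t - B t * B t) / (A t) ^ 2) t := by
    intro t
    have h1 : HasDerivAt (fun t : ℝ => B 0 / A 0 + t) (0 + 1) t :=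
      (hasDerivAt_const t (B 0 / A 0)).add (hasDerivAt_id t)
    have h2 := (hB t).div (hA t) (ne_of_gt (hApos t))
    have := h1.sub h2
    have h3 : HasDerivAt ψ (0 + 1 - (C t * A t - B t * B t) / (A t) ^ 2) t := this
    simpa using h3
  have hψderiv_nonneg : ∀ t, 0 ≤ 1 - (C t * A t - B t * B t) / (A t) ^ 2 := by
    intro t
    have hCA : C t ≤ A t := by
      apply Finset.sum_le_sum
      intro i _
      have he : 0 < Real.exp (t * x i) := Real.exp_pos _
      have := hx i
      nlinarith [mul_pos (hw i) he]
    have hA2 : (0:ℝ) < (A t) ^ 2 := pow_pos (hApos t) 2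
    have : (C t * A t - B t * B t) ≤ (A t) ^ 2 := by
      nlinarith [sq_nonneg (B t), hApos t]
    have := div_le_one_of_le₀ this (le_of_lt hA2)
    linarith
  have hψmono : Monotone ψ := by
    apply monotone_of_deriv_nonneg
    · exact fun t => (hψ t).differentiableAt
    · intro t
      rw [(hψ t).deriv]
      exact hψderiv_nonneg t
  have hψ0 : ψ 0 = 0 := by simp [hψdef]
  have hψnonneg : ∀ t, 0 ≤ t → 0 ≤ ψ t := fun t ht => hψ0 ▸ hψmono ht
  set φ : ℝ → ℝ := fun t => Real.log (A 0) + t * (B 0 / A 0) + t ^ 2 / 2 - Real.log (A t)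
    with hφdef
  have hφ : ∀ t, HasDerivAt φ (ψ t) t := by
    intro t
    have h1 : HasDerivAt (fun t : ℝ => Real.log (A 0) + t * (B 0 / A 0) + t ^ 2 / 2)
        (0 + B 0 / A 0 + (2 * t ^ 1) / 2) t := by
      exact (((hasDerivAt_const t (Real.log (A 0))).add
        (hasDerivAt_mul_const (B 0 / A 0))).add ((hasDerivAt_pow 2 t).div_const 2))
    have h2 : HasDerivAt (fun t => Real.log (A t)) (B t / A t) t :=
      (hA t).log (ne_of_gt (hApos t))
    have h3 := h1.sub h2
    have h4 : HasDerivAt φ (0 + B 0 / A 0 + (2 * t ^ 1) / 2 - B t / A t) t := h3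
    convert h4 using 1
    simp only [hψdef]; ring
  have hφmono : MonotoneOn φ (Set.Ici 0) := by
    apply monotoneOn_of_deriv_nonneg (convex_Ici 0)
    · exact fun t _ => ((hφ t).differentiableAt.continuousAt).continuousWithinAt
    · exact fun t _ => ((hφ t).differentiableAt).differentiableWithinAt
    · intro t ht
      rw [(hφ t).deriv]
      rw [interior_Ici] at ht
      exact hψnonneg t (le_of_lt ht)
  have hφ0 : φ 0 = 0 := by simp [hφdef]
  have := hφmono (Set.self_mem_Ici) (Set.mem_Ici.mpr hc) hc
  rw [hφ0] at this
  have hA0 : A 0 = ∑ i, w i := by simp [hAdef]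
  have hB0 : B 0 = ∑ i, w i * x i := by simp [hBdef]
  have hAc : A c = ∑ i, w i * Real.exp (c * x i) := rfl
  simp only [hφdef] at this
  rw [hA0, hB0] at this
  nlinarith [this]

lemma Ghat_succ {N : ℕ} (α : ℝ) (j : ℕ) (g : Fin N → ℕ → ℝ) (i : Fin N)
    (k : ℕ) (hk : 1 ≤ k) :
    Ghat α j g i (k + 1) = Ghat α j g i k + (1 - α) ^ (j - 1 - k) * g i k := by
  unfold Ghat
  have h1 : k + 1 - 1 = k := rfl
  have h2 : k - 1 + 1 = k := Nat.succ_pred_eq_of_pos hk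
  rw [h1, ← h2, Finset.sum_Icc_succ_top (by omega), h2]

/-- per-step increase of the log-weight-sum of discounted Hedge:
for `1 ≤ k ≤ j-1`,
`ln(W_{k+1}/W_k) ≤ η·(1-α)^{j-1-k}·g_A^k + (η²/2)·(1-α)^{2(j-1-k)}`. -/
theorem discountedHedge_log_weight_step
    (N : ℕ) (hN : 1 ≤ N)
    (α : ℝ) (hα0 : 0 < α) (hα1 : α < 1)
    (η : ℝ) (hη : 0 < η)
    (j : ℕ) (hj : 1 ≤ j)
    (g : Fin N → ℕ → ℝ)
    (hg : ∀ (i : Fin N) (k : ℕ), 1 ≤ k → k ≤ j - 1 → g i k ∈ Set.Icc (-1 : ℝ) 1)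
    (k : ℕ) (hk1 : 1 ≤ k) (hk2 : k ≤ j - 1) :
    Real.log (Wsum α η j g (k + 1) / Wsum α η j g k) ≤
      η * (1 - α) ^ (j - 1 - k) * hedgeGain α η j g k +
        (η ^ 2 / 2) * (1 - α) ^ (2 * (j - 1 - k)) := by
  have hne : Nonempty (Fin N) := Fin.pos_iff_nonempty.mp hN
  set c : ℝ := η * (1 - α) ^ (j - 1 - k) with hcdef
  have hc : 0 ≤ c := le_of_lt (mul_pos hη (pow_pos (by linarith) _))
  set w : Fin N → ℝ := fun i => Real.exp (η * Ghat α j g i k) with hwdef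
  set x : Fin N → ℝ := fun i => g i k with hxdef
  have hw : ∀ i, 0 < w i := fun i => Real.exp_pos _
  have hx : ∀ i, x i * x i ≤ 1 := by
    intro i
    obtain ⟨h1, h2⟩ := hg i k hk1 hk2
    nlinarith
  have hWk : Wsum α η j g k = ∑ i, w i := rfl
  have hWk1 : Wsum α η j g (k + 1) = ∑ i, w i * Real.exp (c * x i) := by
    unfold Wsum
    apply Finset.sum_congr rfl
    intro i _
    rw [Ghat_succ α j g i k hk1, hwdef]
    rw [← Real.exp_add]
    simp only [hcdef, hxdef]
    ring_nf
  have hWkpos : 0 < Wsum α η j g k := by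
    rw [hWk]; exact Finset.sum_pos (fun i _ => hw i) Finset.univ_nonempty
  have hWk1pos : 0 < Wsum α η j g (k + 1) := by
    rw [hWk1]
    exact Finset.sum_pos (fun i _ => mul_pos (hw i) (Real.exp_pos _)) Finset.univ_nonempty
  rw [Real.log_div (ne_of_gt hWk1pos) (ne_of_gt hWkpos)]
  have key := lse_hoeffding (Nat.lt_of_lt_of_le Nat.zero_lt_one hN) w x hw hx c hc
  rw [← hWk, ← hWk1] at key
  have hGain : hedgeGain α η j g k = (∑ i, w i * x i) / (∑ i, w i) := rfl
  have hpow : c ^ 2 / 2 = (η ^ 2 / 2) * (1 - α) ^ (2 * (j - 1 - k)) := by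
    rw [hcdef, mul_pow, ← pow_mul, mul_comm (j - 1 - k) 2]
    ring
  calc Real.log (Wsum α η j g (k + 1)) - Real.log (Wsum α η j g k)
      ≤ c * ((∑ i, w i * x i) / (∑ i, w i)) + c ^ 2 / 2 := key
    _ = η * (1 - α) ^ (j - 1 - k) * hedgeGain α η j g k +
        (η ^ 2 / 2) * (1 - α) ^ (2 * (j - 1 - k)) := by
        rw [hGain, hpow, hcdef]
end
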